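/- The word-reversal anti-involution R composed with T = Ψ_{−t} intertwines interpolated products: T : (k⟨A⟩, ∗_r) → (k⟨A⟩, ∗_{1−r}) is an algebra isomorphism, i.e. T(u ∗_r v) = T(u) ∗_{1−r} T(v) for all u, v. -/

import Mathlib

/-!
Quasi-shuffle algebras (Hoffman–Ihara).  We model the span `kA` of the alphabet
(with its commutative associative product `⋄`, written `*` in `L`) as a
non-unital commutative `k`-algebra `L`, and the word algebra `k⟨A⟩` as the
tensor algebra `TensorAlgebra k L`, in which a word `a₁⋯aₙ` is the product
`ι a₁ * ⋯ * ι aₙ`.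
-/

open TensorAlgebra

variable (k : Type*) [Field k]
variable {L : Type*} [NonUnitalCommRing L] [Module k L]
  [SMulCommClass k L L] [IsScalarTower k L L]

/-- The word `a₁⋯aₙ` as an element of the tensor algebra. -/
def word (l : List L) : TensorAlgebra k L := (l.map fun a => TensorAlgebra.ι k a).prod

/-- The `⋄`-product of the letters of a nonempty block (junk value `0` on `[]`). -/
def blockProd : List L → L
  | [] => 0
  | a :: t => t.foldl (· * ·) a

/-- The Hoffman–Ihara operator `Ψ_f` on words, for `f = c₁t + c₂t² + ⋯`:
`Ψ_f(w) = Σ_{(i₁,…,i_m) composition of ℓ(w)} c_{i₁}⋯c_{i_m} I[w]`,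
written via the recursion on the first block. -/
def psi (c : ℕ → k) : List L → TensorAlgebra k L
  | [] => 1
  | a :: w => ∑ j ∈ Finset.range (w.length + 1),
      c (j + 1) • (TensorAlgebra.ι k (blockProd (a :: w.take j)) * psi c (w.drop j))
  termination_by l => l.length
  decreasing_by simp [List.length_drop] <;> omega


set_option linter.unusedSectionVars false


@[simp] lemma word_nil : word k ([] : List L) = 1 := rfl

@[simp] lemma word_cons (a : L) (l : List L) :
    word k (a :: l) = TensorAlgebra.ι k a * word k l := by
  simp [word]

lemma word_append (u v : List L) : word k (u ++ v) = word k u * word k v := by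
  simp [word]


@[simp] lemma blockProd_singleton (a : L) : blockProd [a] = a := rfl
lemma blockProd_cons2 (a b : L) (l : List L) :
    blockProd (a :: b :: l) = blockProd ((a * b) :: l) := rfl

def P (α β : k) : List L → TensorAlgebra k L
  | [] => 1
  | [a] => α • TensorAlgebra.ι k a
  | a :: b :: w => α • (TensorAlgebra.ι k a * P α β (b :: w)) + β • P α β ((a * b) :: w)
  termination_by l => l.length
  decreasing_by all_goals (simp only [List.length_cons]; omega)

@[simp] lemma P_nil (α β : k) : P k α β ([] : List L) = 1 := by rw [P]
@[simp] lemma P_single (α β : k) (a : L) : P k α β [a] = α • TensorAlgebra.ι k a := by rw [P]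
lemma P_cons2 (α β : k) (a b : L) (w : List L) :
    P k α β (a :: b :: w)
      = α • (TensorAlgebra.ι k a * P k α β (b :: w)) + β • P k α β ((a * b) :: w) := by
  rw [P]

@[simp] lemma psi_nil (c : ℕ → k) : psi k c ([] : List L) = 1 := by rw [psi]

lemma psi_cons (c : ℕ → k) (a : L) (w : List L) :
    psi k c (a :: w) = ∑ j ∈ Finset.range (w.length + 1),
      c (j + 1) • (TensorAlgebra.ι k (blockProd (a :: w.take j)) * psi k c (w.drop j)) := by
  rw [psi]

lemma psi_eq_P_aux (α β : k) : ∀ (n : ℕ) (w : List L), w.length ≤ n →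
    psi k (fun n => α * β ^ (n - 1)) w = P k α β w := by
  intro n
  induction n with
  | zero =>
      intro w hw
      rw [Nat.le_zero, List.length_eq_zero_iff] at hw
      subst hw; simp
  | succ n ih =>
    intro w hw
    match w with
    | [] => simp
    | [a] =>
        rw [psi_cons, P_single]
        simp
    | a :: b :: w =>
        rw [psi_cons, P_cons2]
        have hlen : (b :: w).length + 1 = (w.length + 1) + 1 := by simp
        rw [hlen, Finset.sum_range_succ', add_comm]
        congr 1
        · -- j = 0 term
          simp only [List.take_zero, List.drop_zero, blockProd_singleton, pow_zero,
            Nat.add_sub_cancel, mul_one]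
          rw [ih (b :: w) (by simpa using hw)]
        · -- shifted sum equals β • P ((a*b)::w)
          rw [← ih ((a*b) :: w) (by simpa using hw)]
          rw [psi_cons, Finset.smul_sum]
          apply Finset.sum_congr rfl
          intro j hj
          have h1 : (b :: w).take (j+1) = b :: w.take j := rfl
          have h2 : (b :: w).drop (j+1) = w.drop j := rfl
          rw [h1, h2, blockProd_cons2, smul_smul]
          simp only [Nat.add_sub_cancel]
          congr 1
          ring
        
lemma psi_eq_P (α β : k) (w : List L) :
    psi k (fun n => α * β ^ (n - 1)) w = P k α β w :=
  psi_eq_P_aux k α β w.length w le_rfl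

lemma P_scale (s α β : k) : ∀ (n : ℕ) (w : List L), w.length ≤ n →
    P k (s * α) (s * β) w = s ^ w.length • P k α β w := by
  intro n
  induction n with
  | zero =>
      intro w hw
      rw [Nat.le_zero, List.length_eq_zero_iff] at hw
      subst hw; simp
  | succ n ih =>
    intro w hw
    match w with
    | [] => simp
    | [a] => simp [mul_smul]
    | a :: b :: w =>
        rw [P_cons2, P_cons2]
        rw [ih (b :: w) (by simpa using hw), ih ((a*b) :: w) (by simpa using hw)]
        simp only [List.length_cons, smul_add, smul_smul, pow_succ]
        rw [Algebra.mul_smul_comm]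
        rw [smul_smul]
        congr 2
        · ring
        · ring

lemma P_one_zero : ∀ (n : ℕ) (w : List L), w.length ≤ n → P k 1 (0:k) w = word k w := by
  intro n
  induction n with
  | zero =>
      intro w hw
      rw [Nat.le_zero, List.length_eq_zero_iff] at hw
      subst hw; simp
  | succ n ih =>
    intro w hw
    match w with
    | [] => simp
    | [a] => simp
    | a :: b :: w =>
        rw [P_cons2, ih (b :: w) (by simpa using hw)]
        simp


def mulFirst (a : L) : List L → List L
  | [] => []
  | b :: t => (a * b) :: t

def Kc (α β α' β' : k) : List L → List L → TensorAlgebra k L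
  | u, [] => P k α β u
  | u, [b] => α' • P k α β (u ++ [b])
  | u, b :: c :: w => α' • Kc α β α' β' (u ++ [b]) (c :: w) + β' • Kc α β α' β' u ((b * c) :: w)
  termination_by u w => w.length
  decreasing_by all_goals (simp only [List.length_cons]; omega)

lemma Kc_nil (α β α' β' : k) (u : List L) : Kc k α β α' β' u [] = P k α β u := by rw [Kc]
lemma Kc_single (α β α' β' : k) (u : List L) (b : L) :
    Kc k α β α' β' u [b] = α' • P k α β (u ++ [b]) := by rw [Kc]
lemma Kc_cons2 (α β α' β' : k) (u : List L) (b c : L) (w : List L) :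
    Kc k α β α' β' u (b :: c :: w)
      = α' • Kc k α β α' β' (u ++ [b]) (c :: w) + β' • Kc k α β α' β' u ((b * c) :: w) := by
  rw [Kc]

lemma P_cons_append (α β : k) (a b : L) (u : List L) :
    P k α β (a :: b :: u) = α • (TensorAlgebra.ι k a * P k α β (b :: u)) + β • P k α β ((a*b) :: u) :=
  P_cons2 k α β a b u

/-- two-term recursion for `Kc` in the first list, when it has ≥ 2 entries. -/
lemma Kc_two (α β α' β' : k) : ∀ (n : ℕ) (w : List L), w.length ≤ n →
    ∀ (a b : L) (u : List L),
    Kc k α β α' β' (a :: b :: u) w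
      = α • (TensorAlgebra.ι k a * Kc k α β α' β' (b :: u) w) + β • Kc k α β α' β' ((a*b) :: u) w := by
  intro n
  induction n with
  | zero =>
      intro w hw
      rw [Nat.le_zero, List.length_eq_zero_iff] at hw
      subst hw
      intro a b u
      simp only [Kc_nil]
      exact P_cons2 k α β a b u
  | succ n ih =>
    intro w hw a b u
    match w with
    | [] => simp only [Kc_nil]; exact P_cons2 k α β a b u
    | [x] =>
        simp only [Kc_single]
        have : (a :: b :: u) ++ [x] = a :: b :: (u ++ [x]) := rfl
        rw [this, P_cons2]
        have h2 : (b :: u) ++ [x] = b :: (u ++ [x]) := rfl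
        have h3 : ((a*b) :: u) ++ [x] = (a*b) :: (u ++ [x]) := rfl
        rw [h2, h3]
        simp only [mul_add, smul_add, smul_smul, Algebra.mul_smul_comm]
        ring_nf
    | x :: y :: w' =>
        rw [Kc_cons2, Kc_cons2, Kc_cons2]
        have e1 : (a :: b :: u) ++ [x] = a :: b :: (u ++ [x]) := rfl
        have e2 : (b :: u) ++ [x] = b :: (u ++ [x]) := rfl
        have e3 : ((a*b) :: u) ++ [x] = (a*b) :: (u ++ [x]) := rfl
        rw [e1, e2, e3]
        rw [ih (y :: w') (by simpa using hw) a b (u ++ [x])]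
        rw [ih ((x*y) :: w') (by simpa using hw) a b u]
        simp only [mul_add, smul_add, smul_smul, Algebra.mul_smul_comm]
        ring_nf
        abel

lemma Kc_one (α β α' β' : k) : ∀ (n : ℕ) (w : List L), w.length ≤ n → w ≠ [] → ∀ (a : L),
    Kc k α β α' β' [a] w
      = α • (TensorAlgebra.ι k a * Kc k α β α' β' [] w) + β • Kc k α β α' β' [] (mulFirst a w) := by
  intro n
  induction n with
  | zero =>
      intro w hw hne
      rw [Nat.le_zero, List.length_eq_zero_iff] at hw
      exact absurd hw hne
  | succ n ih =>
    intro w hw hne a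
    match w with
    | [x] =>
        simp only [Kc_single, mulFirst]
        have : ([a] : List L) ++ [x] = [a, x] := rfl
        rw [this, P_cons2]
        simp only [List.nil_append]
        simp only [mul_add, smul_add, smul_smul, Algebra.mul_smul_comm]
        ring_nf
    | x :: y :: w' =>
        rw [Kc_cons2]
        have e1 : ([a] : List L) ++ [x] = a :: x :: [] := rfl
        rw [e1]
        rw [Kc_two k α β α' β' _ (y :: w') le_rfl a x []]
        rw [ih ((x*y) :: w') (by simpa using hw) (by simp) a]
        simp only [mulFirst]
        rw [Kc_cons2 k α β α' β' [] x y w', Kc_cons2 k α β α' β' [] (a*x) y w']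
        simp only [List.nil_append]
        rw [ih (y :: w') (by simpa using hw) (by simp) x]
        rw [ih (y :: w') (by simpa using hw) (by simp) (a*x)]
        have hassoc1 : a * (x * y) = (a * x) * y := (mul_assoc a x y).symm
        rw [hassoc1]
        simp only [mul_add, smul_add, smul_smul, Algebra.mul_smul_comm]
        ring_nf
        abel

lemma Kc_eq_P (α β α' β' : k) : ∀ (n : ℕ) (w : List L), w.length ≤ n →
    Kc k α β α' β' [] w = P k (α * α') (β' + β * α') w := by
  intro n
  induction n with
  | zero =>
      intro w hw
      rw [Nat.le_zero, List.length_eq_zero_iff] at hw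
      subst hw; simp [Kc_nil]
  | succ n ih =>
    intro w hw
    match w with
    | [] => simp [Kc_nil]
    | [b] => simp [Kc_single, smul_smul, mul_comm]
    | b :: c :: w' =>
        rw [Kc_cons2]
        have e1 : ([] : List L) ++ [b] = [b] := rfl
        rw [e1]
        rw [Kc_one k α β α' β' _ (c :: w') le_rfl (by simp) b]
        simp only [mulFirst]
        rw [ih (c :: w') (by simpa using hw), ih ((b*c) :: w') (by simpa using hw)]
        rw [P_cons2]
        simp only [mul_add, smul_add, smul_smul, Algebra.mul_smul_comm, add_smul]
        ring_nf
        abel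

/-- The key composition lemma. -/
lemma comp_aux {S : TensorAlgebra k L →ₗ[k] TensorAlgebra k L} {α β : k}
    (hS : ∀ w : List L, S (word k w) = P k α β w) (α' β' : k) :
    ∀ (n : ℕ) (w : List L), w.length ≤ n → ∀ (u : List L),
    S (word k u * P k α' β' w) = Kc k α β α' β' u w := by
  intro n
  induction n with
  | zero =>
      intro w hw
      rw [Nat.le_zero, List.length_eq_zero_iff] at hw
      subst hw
      intro u
      simp [Kc_nil, hS]
  | succ n ih =>
    intro w hw u
    match w with
    | [] => simp [Kc_nil, hS]
    | [b] =>
        rw [P_single, Kc_single, Algebra.mul_smul_comm, map_smul]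
        have : word k u * TensorAlgebra.ι k b = word k (u ++ [b]) := by
          rw [word_append]; simp
        rw [this, hS]
    | b :: c :: w' =>
        rw [P_cons2, Kc_cons2]
        rw [mul_add, Algebra.mul_smul_comm, Algebra.mul_smul_comm, map_add, map_smul, map_smul]
        have e1 : word k u * (TensorAlgebra.ι k b * P k α' β' (c :: w'))
            = word k (u ++ [b]) * P k α' β' (c :: w') := by
          rw [word_append, mul_assoc]; simp
        rw [e1]
        rw [ih (c :: w') (by simpa using hw) (u ++ [b])]
        rw [ih ((b*c) :: w') (by simpa using hw) u]

lemma comp_P {S : TensorAlgebra k L →ₗ[k] TensorAlgebra k L} {α β : k}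
    (hS : ∀ w : List L, S (word k w) = P k α β w) (α' β' : k) (w : List L) :
    S (P k α' β' w) = P k (α * α') (β' + β * α') w := by
  have := comp_aux k hS α' β' w.length w le_rfl []
  simp only [word_nil, one_mul] at this
  rw [this, Kc_eq_P k α β α' β' w.length w le_rfl]


lemma span_word : Submodule.span k (Set.range (word k : List L → TensorAlgebra k L)) = ⊤ := by
  rw [eq_top_iff]
  rintro x -
  induction x using TensorAlgebra.induction with
  | algebraMap c =>
      have : (algebraMap k (TensorAlgebra k L)) c = c • word k [] := by
        simp [Algebra.algebraMap_eq_smul_one]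
      rw [this]
      exact Submodule.smul_mem _ _ (Submodule.subset_span ⟨[], rfl⟩)
  | ι a =>
      have : TensorAlgebra.ι k a = word k [a] := by simp
      rw [this]; exact Submodule.subset_span ⟨[a], rfl⟩
  | mul x y hx hy =>
      have key : ∀ u : List L, ∀ y ∈ Submodule.span k (Set.range (word k : List L → TensorAlgebra k L)),
          word k u * y ∈ Submodule.span k (Set.range (word k : List L → TensorAlgebra k L)) := by
        intro u y hy
        induction hy using Submodule.span_induction with
        | mem z hz => obtain ⟨v, rfl⟩ := hz; rw [← word_append]; exact Submodule.subset_span ⟨_, rfl⟩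
        | zero => simp
        | add a b _ _ ha hb => rw [mul_add]; exact Submodule.add_mem _ ha hb
        | smul c a _ ha => rw [Algebra.mul_smul_comm]; exact Submodule.smul_mem _ _ ha
      induction hx using Submodule.span_induction with
      | mem z hz => obtain ⟨u, rfl⟩ := hz; exact key u y hy
      | zero => simp
      | add a b _ _ ha hb => rw [add_mul]; exact Submodule.add_mem _ ha hb
      | smul c a _ ha => rw [smul_mul_assoc]; exact Submodule.smul_mem _ _ ha
  | add x y hx hy => exact Submodule.add_mem _ hx hy

lemma lin_ext {f g : TensorAlgebra k L →ₗ[k] TensorAlgebra k L}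
    (h : ∀ w : List L, f (word k w) = g (word k w)) : f = g := by
  refine LinearMap.ext_on (span_word k) ?_
  rintro _ ⟨w, rfl⟩
  exact h w

lemma bilin_ext {B C : TensorAlgebra k L →ₗ[k] TensorAlgebra k L →ₗ[k] TensorAlgebra k L}
    (h : ∀ u v : List L, B (word k u) (word k v) = C (word k u) (word k v)) : B = C := by
  refine LinearMap.ext_on (span_word k) ?_
  rintro _ ⟨u, rfl⟩
  refine LinearMap.ext_on (span_word k) ?_
  rintro _ ⟨v, rfl⟩
  exact h u v

/-! ### The twisted square-zero extension, used to build the first-letter operators `Da`. -/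

def eps : TensorAlgebra k L →ₐ[k] k := TensorAlgebra.lift k (0 : L →ₗ[k] k)

@[simp] lemma eps_ι (a : L) : eps k (TensorAlgebra.ι k a) = 0 := by
  simp [eps]

def Tw (K : Type*) [CommSemiring K] (M : Type*) [AddCommMonoid M] [Module K M] :=
  TensorAlgebra K M × TensorAlgebra K M

namespace Tw

variable {k}

def mk (x y : TensorAlgebra k L) : Tw k L := (x, y)

def fst (x : Tw k L) : TensorAlgebra k L :=
  (show TensorAlgebra k L × TensorAlgebra k L from x).1

def snd (x : Tw k L) : TensorAlgebra k L :=
  (show TensorAlgebra k L × TensorAlgebra k L from x).2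

instance : AddCommGroup (Tw k L) :=
  inferInstanceAs (AddCommGroup (TensorAlgebra k L × TensorAlgebra k L))

instance : Module k (Tw k L) :=
  inferInstanceAs (Module k (TensorAlgebra k L × TensorAlgebra k L))

lemma ext {x y : Tw k L} (h1 : fst x = fst y) (h2 : snd x = snd y) :
    x = y := Prod.ext h1 h2

instance : Mul (Tw k L) :=
  ⟨fun x y => mk (fst x * fst y) (snd x * fst y + eps k (fst x) • snd y)⟩

instance : One (Tw k L) := ⟨mk 1 0⟩

@[simp] lemma fst_mul (x y : Tw k L) :
    fst (x * y) = fst x * fst y := rfl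
@[simp] lemma snd_mul (x y : Tw k L) :
    snd (x * y) = snd x * fst y + eps k (fst x) • snd y := rfl
@[simp] lemma fst_one : fst (1 : Tw k L) = 1 := rfl
@[simp] lemma snd_one : snd (1 : Tw k L) = 0 := rfl
@[simp] lemma fst_add (x y : Tw k L) :
    fst (x + y) = fst x + fst y := rfl
@[simp] lemma snd_add (x y : Tw k L) :
    snd (x + y) = snd x + snd y := rfl
@[simp] lemma fst_smul (c : k) (x : Tw k L) :
    fst (c • x) = c • fst x := rfl
@[simp] lemma snd_smul (c : k) (x : Tw k L) :
    snd (c • x) = c • snd x := rfl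
@[simp] lemma fst_mk (x y : TensorAlgebra k L) : fst (mk x y) = x := rfl
@[simp] lemma snd_mk (x y : TensorAlgebra k L) : snd (mk x y) = y := rfl
@[simp] lemma fst_zero : fst (0 : Tw k L) = 0 := rfl
@[simp] lemma snd_zero : snd (0 : Tw k L) = 0 := rfl

instance : Ring (Tw k L) :=
  { (inferInstance : AddCommGroup (Tw k L)) with
    mul := (· * ·)
    one := 1
    left_distrib := fun a b c => ext (by simp [mul_add]) (by simp [mul_add, smul_add]; abel)
    right_distrib := fun a b c => ext (by simp [add_mul]) (by simp [add_mul, add_smul]; abel)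
    zero_mul := fun a => ext (by simp) (by simp)
    mul_zero := fun a => ext (by simp) (by simp)
    mul_assoc := fun a b c => ext (by simp [mul_assoc])
      (by
        simp only [snd_mul, fst_mul, map_mul]
        rw [add_mul, smul_mul_assoc, smul_add, smul_smul, mul_assoc]
        rw [mul_smul]
        abel)
    one_mul := fun a => ext (by simp) (by simp)
    mul_one := fun a => ext (by simp) (by simp) }

instance : Algebra k (Tw k L) :=
  Algebra.ofModule
    (fun r x y => ext (by simp [smul_mul_assoc])
      (by
        simp only [snd_mul, fst_mul, fst_smul, snd_smul, map_smul,
          smul_mul_assoc, smul_add, smul_assoc]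
        try rw [smul_eq_mul, mul_smul]))
    (fun r x y => ext (by simp [mul_smul_comm])
      (by
        simp only [snd_mul, fst_mul, fst_smul, snd_smul, mul_smul_comm, smul_add]
        rw [smul_comm (eps k (fst x)) r]))

end Tw

def delta (a : L) : L →ₗ[k] Tw k L where
  toFun c := Tw.mk (TensorAlgebra.ι k c) (TensorAlgebra.ι k (a * c))
  map_add' x y := by
    apply Tw.ext <;> simp [mul_add]
  map_smul' r x := by
    apply Tw.ext <;> simp [mul_smul_comm]

def rho (a : L) : TensorAlgebra k L →ₐ[k] Tw k L := TensorAlgebra.lift k (delta k a)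

@[simp] lemma rho_ι (a c : L) :
    rho k a (TensorAlgebra.ι k c) = Tw.mk (TensorAlgebra.ι k c) (TensorAlgebra.ι k (a * c)) := by
  simp [rho, delta]

def Da (a : L) : TensorAlgebra k L →ₗ[k] TensorAlgebra k L where
  toFun x := Tw.snd (rho k a x)
  map_add' x y := by simp
  map_smul' r x := by simp

lemma Da_apply (a : L) (x : TensorAlgebra k L) : Da k a x = Tw.snd (rho k a x) := rfl

lemma rho_fst (a : L) : ∀ w : List L, Tw.fst (rho k a (word k w)) = word k w := by
  intro w
  induction w with
  | nil => simp only [word_nil, map_one, Tw.fst_one]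
  | cons c t ih => rw [word_cons, map_mul, Tw.fst_mul, rho_ι, Tw.fst_mk, ih]

@[simp] lemma Da_one (a : L) : Da k a (1 : TensorAlgebra k L) = 0 := by
  simp [Da_apply]

lemma Da_word_cons (a c : L) (w : List L) :
    Da k a (word k (c :: w)) = word k ((a * c) :: w) := by
  rw [Da_apply, word_cons, map_mul, Tw.snd_mul, rho_ι, Tw.fst_mk, Tw.snd_mk, rho_fst, eps_ι,
    zero_smul, add_zero, word_cons]

lemma Da_mulLeft (a c : L) (x : TensorAlgebra k L) :
    Da k a (TensorAlgebra.ι k c * x) = TensorAlgebra.ι k (a * c) * x := by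
  have : (Da k a) ∘ₗ (LinearMap.mulLeft k (TensorAlgebra.ι k c))
      = LinearMap.mulLeft k (TensorAlgebra.ι k (a * c)) := by
    apply lin_ext
    intro w
    simp only [LinearMap.comp_apply, LinearMap.mulLeft_apply]
    rw [← word_cons, Da_word_cons, word_cons]
  exact DFunLike.congr_fun this x


@[simp] lemma Da_ι (a c : L) :
    Da k a (TensorAlgebra.ι k c) = TensorAlgebra.ι k (a * c) := by
  simp [Da_apply]

lemma Da_P (α β : k) : ∀ (n : ℕ) (w : List L), w.length ≤ n → ∀ (a c : L),
    Da k a (P k α β (c :: w)) = P k α β ((a * c) :: w) := by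
  intro n
  induction n with
  | zero =>
      intro w hw
      rw [Nat.le_zero, List.length_eq_zero_iff] at hw
      subst hw
      intro a c
      simp [Algebra.mul_smul_comm]
  | succ n ih =>
    intro w hw a c
    match w with
    | [] => simp [Algebra.mul_smul_comm]
    | d :: w' =>
        rw [P_cons2, P_cons2, map_add, map_smul, map_smul, Da_mulLeft,
          ih w' (by simpa using hw) a (c * d), mul_assoc]

lemma p_cons (a : L) (v : List L) :
    P k (-1 : k) (-1 : k) (a :: v)
      = -(TensorAlgebra.ι k a * P k (-1 : k) (-1 : k) v)
        - Da k a (P k (-1 : k) (-1 : k) v) := by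
  match v with
  | [] => simp
  | c :: w =>
      rw [P_cons2, Da_P k (-1) (-1) w.length w le_rfl a c]
      simp only [neg_smul, one_smul, neg_neg]
      abel

lemma hmrec' (m : TensorAlgebra k L →ₗ[k] TensorAlgebra k L →ₗ[k] TensorAlgebra k L)
    (hmrec : ∀ (a b : L) (v w : List L),
      m (TensorAlgebra.ι k a * word k v) (TensorAlgebra.ι k b * word k w)
        = TensorAlgebra.ι k a * m (word k v) (TensorAlgebra.ι k b * word k w)
          + TensorAlgebra.ι k b * m (TensorAlgebra.ι k a * word k v) (word k w)
          + TensorAlgebra.ι k (a * b) * m (word k v) (word k w))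
    (a b : L) (X Y : TensorAlgebra k L) :
    m (TensorAlgebra.ι k a * X) (TensorAlgebra.ι k b * Y)
      = TensorAlgebra.ι k a * m X (TensorAlgebra.ι k b * Y)
        + TensorAlgebra.ι k b * m (TensorAlgebra.ι k a * X) Y
        + TensorAlgebra.ι k (a * b) * m X Y := by
  have key : m.compl₁₂ (LinearMap.mulLeft k (TensorAlgebra.ι k a))
        (LinearMap.mulLeft k (TensorAlgebra.ι k b))
      = ((m.compl₁₂ LinearMap.id (LinearMap.mulLeft k (TensorAlgebra.ι k b))).compr₂
          (LinearMap.mulLeft k (TensorAlgebra.ι k a)))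
        + ((m.compl₁₂ (LinearMap.mulLeft k (TensorAlgebra.ι k a)) LinearMap.id).compr₂
          (LinearMap.mulLeft k (TensorAlgebra.ι k b)))
        + (m.compr₂ (LinearMap.mulLeft k (TensorAlgebra.ι k (a * b)))) := by
    apply bilin_ext
    intro u v
    simp only [LinearMap.compl₁₂_apply, LinearMap.compr₂_apply, LinearMap.add_apply,
      LinearMap.mulLeft_apply, LinearMap.id_apply]
    exact hmrec a b u v
  have := DFunLike.congr_fun (DFunLike.congr_fun key X) Y
  simpa only [LinearMap.compl₁₂_apply, LinearMap.compr₂_apply, LinearMap.add_apply,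
    LinearMap.mulLeft_apply, LinearMap.id_apply] using this


lemma Da_word_nil (a : L) : Da k a (word k ([] : List L)) = 0 := by simp

section Star

variable (m : TensorAlgebra k L →ₗ[k] TensorAlgebra k L →ₗ[k] TensorAlgebra k L)
variable (hmul : ∀ x, m 1 x = x) (hmur : ∀ x, m x 1 = x)
variable (hmrec : ∀ (a b : L) (v w : List L),
      m (TensorAlgebra.ι k a * word k v) (TensorAlgebra.ι k b * word k w)
        = TensorAlgebra.ι k a * m (word k v) (TensorAlgebra.ι k b * word k w)
          + TensorAlgebra.ι k b * m (TensorAlgebra.ι k a * word k v) (word k w)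
          + TensorAlgebra.ι k (a * b) * m (word k v) (word k w))

include hmrec in
lemma hm2 (x y : L) (u v : List L) :
    m (word k (x::u)) (word k (y::v))
      = TensorAlgebra.ι k x * m (word k u) (word k (y::v))
        + TensorAlgebra.ι k y * m (word k (x::u)) (word k v)
        + TensorAlgebra.ι k (x*y) * m (word k u) (word k v) := by
  simp only [word_cons]
  exact hmrec x y u v

include hmul hmur hmrec in
lemma star_words (a b : L) (u v : List L) :
    letI X := word k u
    letI Y := word k v
    TensorAlgebra.ι k a * m X (Da k b Y) + Da k a (m X (TensorAlgebra.ι k b * Y))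
      + Da k a (m X (Da k b Y))
      + TensorAlgebra.ι k b * m (Da k a X) Y + Da k b (m (TensorAlgebra.ι k a * X) Y)
      + Da k b (m (Da k a X) Y)
    = (TensorAlgebra.ι k (a*b) * m X Y + TensorAlgebra.ι k (a*b) * m X Y)
      + Da k (a*b) (m X Y)
      + m (TensorAlgebra.ι k a * X) (Da k b Y) + m (Da k a X) (TensorAlgebra.ι k b * Y)
      + m (Da k a X) (Da k b Y) := by
  have h2 := hm2 k m hmrec
  match u, v with
  | [], [] =>
      simp only [Da_word_cons, Da_word_nil, ← word_cons]
      try simp only [h2]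
      simp only [word_nil, word_cons, hmul, hmur, map_add, map_zero, LinearMap.zero_apply,
        LinearMap.map_zero, Da_mulLeft, Da_ι, Da_one, mul_add, mul_zero, zero_mul, mul_one,
        one_mul, add_zero, zero_add, mul_assoc]
      try simp only [mul_comm, mul_left_comm, mul_assoc]
      try abel
  | [], d :: v' =>
      simp only [Da_word_cons, Da_word_nil, ← word_cons]
      try simp only [h2]
      simp only [word_nil, word_cons, hmul, hmur, map_add, map_zero, LinearMap.zero_apply,
        LinearMap.map_zero, Da_mulLeft, Da_ι, Da_one, mul_add, mul_zero, zero_mul, mul_one,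
        one_mul, add_zero, zero_add, mul_assoc]
      try simp only [mul_comm, mul_left_comm, mul_assoc]
      try abel
  | c :: u', [] =>
      simp only [Da_word_cons, Da_word_nil, ← word_cons]
      try simp only [h2]
      simp only [word_nil, word_cons, hmul, hmur, map_add, map_zero, LinearMap.zero_apply,
        LinearMap.map_zero, Da_mulLeft, Da_ι, Da_one, mul_add, mul_zero, zero_mul, mul_one,
        one_mul, add_zero, zero_add, mul_assoc]
      try simp only [mul_comm, mul_left_comm, mul_assoc]
      try abel
  | c :: u', d :: v' =>
      simp only [Da_word_cons, Da_word_nil, ← word_cons]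
      try simp only [h2]
      simp only [word_nil, word_cons, hmul, hmur, map_add, map_zero, LinearMap.zero_apply,
        LinearMap.map_zero, Da_mulLeft, Da_ι, Da_one, mul_add, mul_zero, zero_mul, mul_one,
        one_mul, add_zero, zero_add, mul_assoc]
      try simp only [mul_comm, mul_left_comm, mul_assoc]
      try abel

end Star


lemma P_congr {α β α' β' : k} (h1 : α = α') (h2 : β = β') (w : List L) :
    P k α β w = P k α' β' w := by rw [h1, h2]

section Hom

variable (m : TensorAlgebra k L →ₗ[k] TensorAlgebra k L →ₗ[k] TensorAlgebra k L)
variable (hmul : ∀ x, m 1 x = x) (hmur : ∀ x, m x 1 = x)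
variable (hmrec : ∀ (a b : L) (v w : List L),
      m (TensorAlgebra.ι k a * word k v) (TensorAlgebra.ι k b * word k w)
        = TensorAlgebra.ι k a * m (word k v) (TensorAlgebra.ι k b * word k w)
          + TensorAlgebra.ι k b * m (TensorAlgebra.ι k a * word k v) (word k w)
          + TensorAlgebra.ι k (a * b) * m (word k v) (word k w))
variable (S : TensorAlgebra k L →ₗ[k] TensorAlgebra k L)
variable (hS : ∀ w : List L, S (word k w) = P k (-1 : k) (-1 : k) w)

include hmul hmur hmrec in
lemma star_all (a b : L) (X Y : TensorAlgebra k L) :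
    TensorAlgebra.ι k a * m X (Da k b Y) + Da k a (m X (TensorAlgebra.ι k b * Y))
      + Da k a (m X (Da k b Y))
      + TensorAlgebra.ι k b * m (Da k a X) Y + Da k b (m (TensorAlgebra.ι k a * X) Y)
      + Da k b (m (Da k a X) Y)
    = (TensorAlgebra.ι k (a*b) * m X Y + TensorAlgebra.ι k (a*b) * m X Y)
      + Da k (a*b) (m X Y)
      + m (TensorAlgebra.ι k a * X) (Da k b Y) + m (Da k a X) (TensorAlgebra.ι k b * Y)
      + m (Da k a X) (Da k b Y) := by
  classical
  letI La := LinearMap.mulLeft k (TensorAlgebra.ι k a)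
  letI Lb := LinearMap.mulLeft k (TensorAlgebra.ι k b)
  letI Lab := LinearMap.mulLeft k (TensorAlgebra.ι k (a*b))
  letI DA := Da k a
  letI DB := Da k b
  letI DAB := Da k (a*b)
  have key : (m.compl₁₂ LinearMap.id DB).compr₂ La
        + (m.compl₁₂ LinearMap.id Lb).compr₂ DA
        + (m.compl₁₂ LinearMap.id DB).compr₂ DA
        + (m.compl₁₂ DA LinearMap.id).compr₂ Lb
        + (m.compl₁₂ La LinearMap.id).compr₂ DB
        + (m.compl₁₂ DA LinearMap.id).compr₂ DB
      = (m.compr₂ Lab + m.compr₂ Lab)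
        + m.compr₂ DAB
        + m.compl₁₂ La DB + m.compl₁₂ DA Lb + m.compl₁₂ DA DB := by
    apply bilin_ext
    intro u v
    simp only [LinearMap.compl₁₂_apply, LinearMap.compr₂_apply, LinearMap.add_apply,
      LinearMap.mulLeft_apply, LinearMap.id_apply]
    exact star_words k m hmul hmur hmrec a b u v
  have := DFunLike.congr_fun (DFunLike.congr_fun key X) Y
  exact this

include hS in
lemma S_mulLeft (a : L) (X : TensorAlgebra k L) :
    S (TensorAlgebra.ι k a * X)
      = -(TensorAlgebra.ι k a * S X) - Da k a (S X) := by
  have key : S ∘ₗ LinearMap.mulLeft k (TensorAlgebra.ι k a)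
      = -((LinearMap.mulLeft k (TensorAlgebra.ι k a)) ∘ₗ S) - ((Da k a) ∘ₗ S) := by
    apply lin_ext
    intro w
    simp only [LinearMap.comp_apply, LinearMap.sub_apply, LinearMap.neg_apply,
      LinearMap.mulLeft_apply]
    rw [← word_cons, hS, hS, p_cons]
  have := DFunLike.congr_fun key X
  simpa only [LinearMap.comp_apply, LinearMap.sub_apply, LinearMap.neg_apply,
    LinearMap.mulLeft_apply] using this

include hmul hmur hmrec hS in
lemma homMain : ∀ (n : ℕ) (u v : List L), u.length + v.length ≤ n →
    S (m (word k u) (word k v))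
      = m (P k (-1 : k) (-1 : k) u) (P k (-1 : k) (-1 : k) v) := by
  intro n
  induction n with
  | zero =>
      intro u v huv
      have hu : u = [] := by
        cases u with
        | nil => rfl
        | cons a t => simp at huv
      have hv : v = [] := by
        cases v with
        | nil => rfl
        | cons a t => simp at huv
      subst hu; subst hv
      simp only [word_nil, P_nil, hmul]
      simpa using hS []
  | succ n ih =>
    intro u v huv
    match u, v with
    | [], v =>
        simp only [word_nil, P_nil, hmul]
        exact hS v
    | a :: u', [] =>
        simp only [word_nil, P_nil, hmur]
        exact hS (a :: u')
    | a :: u', b :: v' =>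
        have ih1 : S (m (word k u') (word k (b :: v')))
            = m (P k (-1:k) (-1:k) u') (P k (-1:k) (-1:k) (b :: v')) := by
          apply ih; simp at huv ⊢; omega
        have ih2 : S (m (word k (a :: u')) (word k v'))
            = m (P k (-1:k) (-1:k) (a :: u')) (P k (-1:k) (-1:k) v') := by
          apply ih; simp at huv ⊢; omega
        have ih3 : S (m (word k u') (word k v'))
            = m (P k (-1:k) (-1:k) u') (P k (-1:k) (-1:k) v') := by
          apply ih; simp at huv ⊢; omega
        -- expand the left-hand side
        rw [hm2 k m hmrec a b u' v', map_add, map_add]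
        rw [S_mulLeft k S hS a, S_mulLeft k S hS b, S_mulLeft k S hS (a*b)]
        rw [ih1, ih2, ih3]
        -- rewrite the inner words via p_cons (both sides)
        rw [p_cons k b v', p_cons k a u']
        have hrec' := hmrec' k m hmrec a b (P k (-1:k) (-1:k) u') (P k (-1:k) (-1:k) v')
        simp only [map_sub, map_neg, map_add, LinearMap.sub_apply, LinearMap.neg_apply,
          LinearMap.add_apply, mul_sub, mul_neg, sub_eq_add_neg, neg_add, neg_neg, mul_add]
        rw [hrec']
        have star := star_all k m hmul hmur hmrec a b
          (P k (-1:k) (-1:k) u') (P k (-1:k) (-1:k) v')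
        rw [← sub_eq_zero] at star ⊢
        rw [← star]
        abel

include hmul hmur hmrec hS in
lemma homOp (X Y : TensorAlgebra k L) : S (m X Y) = m (S X) (S Y) := by
  have key : m.compr₂ S = m.compl₁₂ S S := by
    apply bilin_ext
    intro u v
    simp only [LinearMap.compr₂_apply, LinearMap.compl₁₂_apply]
    rw [homMain k m hmul hmur hmrec S hS (u.length + v.length) u v le_rfl, hS, hS]
  have := DFunLike.congr_fun (DFunLike.congr_fun key X) Y
  simpa only [LinearMap.compr₂_apply, LinearMap.compl₁₂_apply] using this

end Hom

/--
`T = Ψ_{−t}` is an algebra isomorphism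
`(k⟨A⟩, ∗_r) → (k⟨A⟩, ∗_{1−r})`, i.e. `T(u ∗_r v) = T(u) ∗_{1−r} T(v)`,
where `u ∗_s v = Σ^{−s}(Σ^s u * Σ^s v)`.
-/
theorem stmt9 (r : k)
    (m : TensorAlgebra k L →ₗ[k] TensorAlgebra k L →ₗ[k] TensorAlgebra k L)
    (hmul : ∀ x, m 1 x = x) (hmur : ∀ x, m x 1 = x)
    (hmrec : ∀ (a b : L) (v w : List L),
      m (TensorAlgebra.ι k a * word k v) (TensorAlgebra.ι k b * word k w)
        = TensorAlgebra.ι k a * m (word k v) (TensorAlgebra.ι k b * word k w)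
          + TensorAlgebra.ι k b * m (TensorAlgebra.ι k a * word k v) (word k w)
          + TensorAlgebra.ι k (a * b) * m (word k v) (word k w))
    (Sr Snr S1r Sn1r : TensorAlgebra k L →ₗ[k] TensorAlgebra k L)
    (hSr : ∀ w : List L, Sr (word k w) = psi k (fun n => r ^ (n - 1)) w)
    (hSnr : ∀ w : List L, Snr (word k w) = psi k (fun n => (-r) ^ (n - 1)) w)
    (hS1r : ∀ w : List L, S1r (word k w) = psi k (fun n => (1 - r) ^ (n - 1)) w)
    (hSn1r : ∀ w : List L, Sn1r (word k w) = psi k (fun n => (r - 1) ^ (n - 1)) w)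
    (T : TensorAlgebra k L →ₗ[k] TensorAlgebra k L)
    (hT : ∀ w : List L, T (word k w) = ((-1 : k) ^ w.length) • word k w)
    (mr m1r : TensorAlgebra k L → TensorAlgebra k L → TensorAlgebra k L)
    (hmr : ∀ x y, mr x y = Snr (m (Sr x) (Sr y)))
    (hm1r : ∀ x y, m1r x y = Sn1r (m (S1r x) (S1r y))) :
    ∀ u v : TensorAlgebra k L, T (mr u v) = m1r (T u) (T v) := by
  -- hypotheses in `P` form
  have hSrP : ∀ w : List L, Sr (word k w) = P k 1 r w := by
    intro w
    rw [hSr, ← psi_eq_P]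
    congr 1
    funext n
    rw [one_mul]
  have hSnrP : ∀ w : List L, Snr (word k w) = P k 1 (-r) w := by
    intro w
    rw [hSnr, ← psi_eq_P]
    congr 1
    funext n
    rw [one_mul]
  have hS1rP : ∀ w : List L, S1r (word k w) = P k 1 (1 - r) w := by
    intro w
    rw [hS1r, ← psi_eq_P]
    congr 1
    funext n
    rw [one_mul]
  have hSn1rP : ∀ w : List L, Sn1r (word k w) = P k 1 (r - 1) w := by
    intro w
    rw [hSn1r, ← psi_eq_P]
    congr 1
    funext n
    rw [one_mul]
  have hTP : ∀ w : List L, T (word k w) = P k (-1 : k) 0 w := by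
    intro w
    rw [hT]
    have h1 : P k (-1 : k) (0 : k) w = P k ((-1 : k) * 1) ((-1 : k) * 0) w :=
      P_congr k (by ring) (by ring) w
    rw [h1, P_scale k (-1 : k) 1 0 w.length w le_rfl, P_one_zero k w.length w le_rfl]
  set Φ := S1r ∘ₗ (Sr ∘ₗ T) with hPhiDef
  have hΦP : ∀ w : List L, Φ (word k w) = P k (-1 : k) (-1 : k) w := by
    intro w
    simp only [hPhiDef, LinearMap.comp_apply]
    rw [hTP, comp_P k hSrP (-1 : k) 0 w, comp_P k hS1rP _ _ w]
    exact P_congr k (by ring) (by ring) w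
  -- operator identities
  have hF1 : T ∘ₗ Snr = Sr ∘ₗ T := by
    apply lin_ext
    intro w
    simp only [LinearMap.comp_apply]
    rw [hSnrP, comp_P k hTP _ _ w, hTP, comp_P k hSrP _ _ w]
    exact P_congr k (by ring) (by ring) w
  have hF2 : T = Snr ∘ₗ (Sn1r ∘ₗ Φ) := by
    apply lin_ext
    intro w
    simp only [LinearMap.comp_apply]
    rw [hΦP, comp_P k hSn1rP _ _ w, comp_P k hSnrP _ _ w, hTP]
    exact (P_congr k (by ring) (by ring) w).symm
  have hF3 : Φ ∘ₗ Sr = S1r ∘ₗ T := by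
    apply lin_ext
    intro w
    simp only [LinearMap.comp_apply]
    rw [hSrP, comp_P k hΦP _ _ w, hTP, comp_P k hS1rP _ _ w]
    exact P_congr k (by ring) (by ring) w
  have hF4 : Sr ∘ₗ (Snr ∘ₗ Sn1r) = Sn1r := by
    apply lin_ext
    intro w
    simp only [LinearMap.comp_apply]
    rw [hSn1rP, comp_P k hSnrP _ _ w, comp_P k hSrP _ _ w]
    exact P_congr k (by ring) (by ring) w
  intro u v
  rw [hmr, hm1r]
  calc T (Snr (m (Sr u) (Sr v)))
      = Sr (T (m (Sr u) (Sr v))) := DFunLike.congr_fun hF1 (m (Sr u) (Sr v))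
    _ = Sr (Snr (Sn1r (Φ (m (Sr u) (Sr v))))) := by
          rw [DFunLike.congr_fun hF2 (m (Sr u) (Sr v))]; rfl
    _ = Sn1r (Φ (m (Sr u) (Sr v))) := DFunLike.congr_fun hF4 (Φ (m (Sr u) (Sr v)))
    _ = Sn1r (m (Φ (Sr u)) (Φ (Sr v))) := by
          rw [homOp k m hmul hmur hmrec Φ hΦP (Sr u) (Sr v)]
    _ = Sn1r (m (S1r (T u)) (S1r (T v))) := by
          have e3 : ∀ x, Φ (Sr x) = S1r (T x) := fun x => DFunLike.congr_fun hF3 x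
          rw [e3 u, e3 v]
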